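/- Let k ≥ 2. The k+2 functions H, p_x, p_y, and C̃_i := C_i(P_2,…,P_{k+2}) for i = 2,…,k, viewed as functions on ℝ^{2(k+2)}, pairwise Poisson-commute: the canonical Poisson bracket of any two of them vanishes identically. -/

import Mathlib

/-- The power functions `P_1, …, P_{k+2}` (0-indexed: `powerFn k a` is `P_{a+1}`) on the
phase space `T^* J^k ≅ ℝ^{k+2} × ℝ^{k+2}`.  Configuration coordinates are indexed so that
`q 0 = x`, `q i = u_{k+1-i}` for `1 ≤ i ≤ k`, `q (k+1) = y`, and `p i` is the momentum
conjugate to `q i` (so `p 0 = p_x`, `p 1 = p_k`, …, `p k = p_1`, `p (k+1) = p_y`).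
Then `P_1 = p_x + u_1 p_y + ∑_{i=2}^k u_i p_{i-1} = p 0 + ∑_{j=1}^{k} q j * p (j+1)`,
and `P_m = p (m-1)` for `2 ≤ m ≤ k+2`. -/
noncomputable def powerFn (k : ℕ) (a : Fin (k + 2))
    (z : (Fin (k + 2) → ℝ) × (Fin (k + 2) → ℝ)) : ℝ :=
  if a = ⟨0, by omega⟩ then
    z.2 ⟨0, by omega⟩ + ∑ j : Fin k, z.1 ⟨j.1 + 1, by omega⟩ * z.2 ⟨j.1 + 2, by omega⟩
  else z.2 a

/-- The sub-Riemannian geodesic Hamiltonian `H = (1/2)(P_1² + P_2²)`. -/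
noncomputable def jetHam (k : ℕ) (z : (Fin (k + 2) → ℝ) × (Fin (k + 2) → ℝ)) : ℝ :=
  (1 / 2) * (powerFn k ⟨0, by omega⟩ z ^ 2 + powerFn k ⟨1, by omega⟩ z ^ 2)

/-- The canonical Poisson bracket `{f,g} = ∑_q (∂f/∂q ∂g/∂p_q − ∂f/∂p_q ∂g/∂q)` on
`ℝ^{2(k+2)} = (Fin (k+2) → ℝ) × (Fin (k+2) → ℝ)` (first factor: configuration coordinates,
second factor: conjugate momenta). -/
noncomputable def poissonBracket (k : ℕ)
    (f g : ((Fin (k + 2) → ℝ) × (Fin (k + 2) → ℝ)) → ℝ)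
    (z : (Fin (k + 2) → ℝ) × (Fin (k + 2) → ℝ)) : ℝ :=
  ∑ i : Fin (k + 2),
    (fderiv ℝ f z ((Pi.single i 1 : Fin (k + 2) → ℝ), (0 : Fin (k + 2) → ℝ)) *
        fderiv ℝ g z ((0 : Fin (k + 2) → ℝ), (Pi.single i 1 : Fin (k + 2) → ℝ)) -
      fderiv ℝ f z ((0 : Fin (k + 2) → ℝ), (Pi.single i 1 : Fin (k + 2) → ℝ)) *
        fderiv ℝ g z ((Pi.single i 1 : Fin (k + 2) → ℝ), (0 : Fin (k + 2) → ℝ)))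

/-- The Casimir functions `C_1, …, C_k` of the variables `(P_2, …, P_{k+2})`:
`C_1 = P_{k+2}` and, for `2 ≤ i ≤ k`,
`C_i = P_{k+2}^{i-1} P_{k+2-i} + ∑_{j=1}^{i-2} (−1)^j P_{k+2}^{i-1-j} P_{k+2-i+j} P_{k+1}^j/j!
      + (−1)^{i-1} P_{k+1}^i/((i−2)!·i)`.
Here `P : ℕ → ℝ` records the values of the variables (1-based indexing). -/
noncomputable def casimir (k i : ℕ) (P : ℕ → ℝ) : ℝ :=
  if i = 1 then P (k + 2)
  else
    P (k + 2) ^ (i - 1) * P (k + 2 - i)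
      + ∑ j ∈ Finset.Icc 1 (i - 2),
          (-1 : ℝ) ^ j * P (k + 2) ^ (i - 1 - j) * P (k + 2 - i + j) * P (k + 1) ^ j
            / (Nat.factorial j : ℝ)
      + (-1 : ℝ) ^ (i - 1) * P (k + 1) ^ i / ((Nat.factorial (i - 2) : ℝ) * (i : ℝ))

/-- The values of the power functions `P_1, …, P_{k+2}` at a phase point, with 1-based
indexing (so `phaseVals k z m = P_m(z)` for `1 ≤ m ≤ k+2`, and `0` otherwise). -/
noncomputable def phaseVals (k : ℕ) (z : (Fin (k + 2) → ℝ) × (Fin (k + 2) → ℝ)) : ℕ → ℝ :=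
  fun m => if h : 1 ≤ m ∧ m ≤ k + 2 then powerFn k ⟨m - 1, by omega⟩ z else 0

/-- The `k+2` first integrals: `integralFamily k 0 = H`, `integralFamily k 1 = p_x`,
`integralFamily k 2 = p_y`, and `integralFamily k j = C̃_{j-1} = C_{j-1}(P_2, …, P_{k+2})`
for `3 ≤ j ≤ k+1`. -/
noncomputable def integralFamily (k : ℕ) (j : Fin (k + 2)) :
    ((Fin (k + 2) → ℝ) × (Fin (k + 2) → ℝ)) → ℝ :=
  if j.1 = 0 then jetHam k
  else if j.1 = 1 then fun z => z.2 ⟨0, by omega⟩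
  else if j.1 = 2 then fun z => z.2 ⟨k + 1, by omega⟩
  else fun z => casimir k (j.1 - 1) (phaseVals k z)


/-! ### Auxiliary machinery -/

theorem HasFDerivAt.npow {E : Type*} [NormedAddCommGroup E] [NormedSpace ℝ E]
    {f : E → ℝ} {f' : E →L[ℝ] ℝ} {x : E} (h : HasFDerivAt f f' x) (n : ℕ) :
    HasFDerivAt (fun x => f x ^ n) ((((n : ℕ) : ℝ) * f x ^ (n - 1)) • f') x :=
  (hasDerivAt_pow n (f x)).comp_hasFDerivAt x h

theorem hasF_q (k : ℕ) (i : Fin (k+2)) (z : (Fin (k+2) → ℝ) × (Fin (k+2) → ℝ)) :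
    HasFDerivAt (fun z : (Fin (k+2) → ℝ) × (Fin (k+2) → ℝ) => z.1 i)
      ((ContinuousLinearMap.proj i).comp (ContinuousLinearMap.fst ℝ _ _)) z :=
  (hasFDerivAt_apply (𝕜 := ℝ) i z.1).comp z hasFDerivAt_fst

theorem hasF_p (k : ℕ) (i : Fin (k+2)) (z : (Fin (k+2) → ℝ) × (Fin (k+2) → ℝ)) :
    HasFDerivAt (fun z : (Fin (k+2) → ℝ) × (Fin (k+2) → ℝ) => z.2 i)
      ((ContinuousLinearMap.proj i).comp (ContinuousLinearMap.snd ℝ _ _)) z :=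
  (hasFDerivAt_apply (𝕜 := ℝ) i z.2).comp z hasFDerivAt_snd

/-- the "shift" direction vector -/
noncomputable def wv (k : ℕ) (p : Fin (k+2) → ℝ) : Fin (k+2) → ℝ :=
  ∑ j : Fin k, p ⟨j.1 + 2, by omega⟩ • (Pi.single (⟨j.1 + 1, by omega⟩ : Fin (k+2)) (1 : ℝ) : Fin (k+2) → ℝ)

theorem wv_apply (k : ℕ) (p : Fin (k+2) → ℝ) (m : Fin (k+2)) :
    wv k p m = if h : 1 ≤ m.1 ∧ m.1 ≤ k then p ⟨m.1 + 1, by omega⟩ else 0 := by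
  rw [wv, Finset.sum_apply]
  split
  · next h =>
    rw [Finset.sum_eq_single (⟨m.1 - 1, by omega⟩ : Fin k)]
    · simp [Pi.single_apply]
      rw [if_pos (by ext; simp; omega)]
      have : m.1 - 1 + 2 = m.1 + 1 := by omega
      simp [this]
    · intro j _ hj
      simp [Pi.single_apply]
      intro hm
      exfalso; apply hj; ext; simp
      have := congrArg Fin.val hm
      simp at this; omega
    · intro h; exact absurd (Finset.mem_univ _) h
  · next h =>
    apply Finset.sum_eq_zero
    intro j _
    simp [Pi.single_apply]
    intro hm
    have := congrArg Fin.val hm; simp at this; omega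

def idx (k m : ℕ) : Fin (k+2) := ⟨min m (k+1), by omega⟩

noncomputable def Gfun (k i : ℕ) (p : Fin (k+2) → ℝ) : ℝ :=
  p (idx k (k+2-1)) ^ (i-1) * p (idx k (k+2-i-1))
    + ∑ j ∈ Finset.Icc 1 (i-2),
        ((-1:ℝ)^j / (Nat.factorial j : ℝ)) *
          (p (idx k (k+2-1)) ^ (i-1-j) * p (idx k (k+2-i+j-1)) * p (idx k (k+1-1)) ^ j)
    + ((-1:ℝ)^(i-1) / ((Nat.factorial (i-2) : ℝ) * (i:ℝ))) * p (idx k (k+1-1)) ^ i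

theorem Gfun_diff (k i : ℕ) (p : Fin (k+2) → ℝ) : DifferentiableAt ℝ (Gfun k i) p := by
  unfold Gfun
  fun_prop

theorem phaseVals_mom (k : ℕ) (z : (Fin (k+2) → ℝ) × (Fin (k+2) → ℝ)) (m : ℕ)
    (h1 : 2 ≤ m) (h2 : m ≤ k+2) : phaseVals k z m = z.2 (idx k (m-1)) := by
  unfold phaseVals
  rw [dif_pos ⟨by omega, h2⟩]
  unfold powerFn
  rw [if_neg (by simp only [Fin.ext_iff]; omega)]
  refine congrArg z.2 (Fin.ext ?_)
  simp only [idx]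
  omega

theorem casimir_eq_Gfun (k i : ℕ) (h2 : 2 ≤ i) (hik : i ≤ k)
    (z : (Fin (k+2) → ℝ) × (Fin (k+2) → ℝ)) :
    casimir k i (phaseVals k z) = Gfun k i z.2 := by
  rw [casimir, if_neg (by omega), Gfun]
  simp only [phaseVals_mom k z (k+2) (by omega) (by omega),
    phaseVals_mom k z (k+2-i) (by omega) (by omega),
    phaseVals_mom k z (k+1) (by omega) (by omega)]
  congr 1
  · congr 1
    refine Finset.sum_congr rfl fun j hj => ?_
    simp only [Finset.mem_Icc] at hj
    rw [phaseVals_mom k z (k+2-i+j) (by omega) (by omega)]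
    ring
  · ring

theorem wv_idx (k m : ℕ) (h1 : 1 ≤ m) (h2 : m ≤ k) (p : Fin (k+2) → ℝ) :
    wv k p (idx k m) = p (idx k (m+1)) := by
  rw [wv_apply, dif_pos (by simp only [idx]; omega)]
  congr 1
  simp only [idx, Fin.ext_iff]
  omega

theorem wv_idx_top (k : ℕ) (p : Fin (k+2) → ℝ) : wv k p (idx k (k+1)) = 0 := by
  rw [wv_apply, dif_neg]
  simp only [idx]
  omega

noncomputable def Tfun (k e : ℕ) (p : Fin (k+2) → ℝ) (j : ℕ) : ℝ :=
  ((-1:ℝ)^j / (Nat.factorial j : ℝ)) *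
    (p (idx k (k+1)) ^ (e+1-j) * p (idx k (k-e+j)) * p (idx k k) ^ j)

theorem tele (T : ℕ → ℝ) (n : ℕ) :
    ∑ j ∈ Finset.Icc 1 n, (T j - T (j-1)) = T n - T 0 := by
  induction n with
  | zero => simp
  | succ n ih =>
    rw [Finset.sum_Icc_succ_top (by omega), ih]
    simp only [Nat.add_sub_cancel]
    ring

set_option maxHeartbeats 1000000 in
theorem Gfun_wv (k i : ℕ) (h2 : 2 ≤ i) (hik : i ≤ k) (p : Fin (k+2) → ℝ) :
    fderiv ℝ (Gfun k i) p (wv k p) = 0 := by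
  obtain ⟨e, rfl⟩ : ∃ e, i = e + 2 := ⟨i - 2, by omega⟩
  have hA := hasFDerivAt_apply (𝕜 := ℝ) (idx k (k+2-1)) p
  have hB := hasFDerivAt_apply (𝕜 := ℝ) (idx k (k+2-(e+2)-1)) p
  have hS := hasFDerivAt_apply (𝕜 := ℝ) (idx k (k+1-1)) p
  have h1 := (hA.npow (e+2-1)).fun_mul hB
  have hsum := HasFDerivAt.fun_sum (u := Finset.Icc 1 (e+2-2)) (x := p)
    (fun j _ => (((hA.npow (e+2-1-j)).fun_mul (hasFDerivAt_apply (𝕜 := ℝ) (idx k (k+2-(e+2)+j-1)) p)).fun_mul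
      (hS.npow j)).const_mul ((-1:ℝ)^j / (Nat.factorial j : ℝ)))
  have h3 := (hS.npow (e+2)).const_mul ((-1:ℝ)^(e+2-1) / ((Nat.factorial (e+2-2) : ℝ) * ((e+2:ℕ):ℝ)))
  have hG := (h1.fun_add hsum).fun_add h3
  unfold Gfun
  rw [hG.fderiv]
  simp only [ContinuousLinearMap.add_apply, ContinuousLinearMap.sum_apply,
    ContinuousLinearMap.smul_apply, ContinuousLinearMap.proj_apply, smul_eq_mul]
  simp only [show k+2-1 = k+1 from rfl, show k+1-1 = k from rfl,
    show e+2-1 = e+1 from rfl, show e+2-2 = e from rfl, show e+1-1 = e from rfl,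
    show k+2-(e+2) = k-e from by omega, show k-e-1+1 = k-e from by omega,
    wv_idx_top,
    wv_idx k (k-e-1) (by omega) (by omega) p,
    wv_idx k k (by omega) (by omega) p,
    show k-e-1+1 = k-e from by omega]
  have hterm : ∀ x ∈ Finset.Icc 1 e,
      (-1:ℝ) ^ x / ↑(Nat.factorial x) *
        (p (idx k (k + 1)) ^ (e + 1 - x) * p (idx k (k - e + x - 1)) *
            (↑x * p (idx k k) ^ (x - 1) * p (idx k (k + 1))) +
          p (idx k k) ^ x *
            (p (idx k (k + 1)) ^ (e + 1 - x) * wv k p (idx k (k - e + x - 1)) +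
              p (idx k (k - e + x - 1)) * (↑(e + 1 - x) * p (idx k (k + 1)) ^ (e + 1 - x - 1) * 0)))
      = Tfun k e p x - Tfun k e p (x-1) := by
    intro x hx
    simp only [Finset.mem_Icc] at hx
    obtain ⟨m, rfl⟩ : ∃ m, x = m + 1 := ⟨x - 1, by omega⟩
    simp only [show k-e+(m+1)-1 = k-e+m from by omega,
      show k-e+m+1-1 = k-e+m from rfl,
      wv_idx k (k-e+m) (by omega) (by omega) p,
      show (m+1)-1 = m from rfl,
      show e+1-(m+1) = e-m from by omega,
      show e+1-m = e-m+1 from by omega,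
      show k-e+(m+1) = k-e+m+1 from rfl,
      Tfun, Nat.factorial_succ]
    have hm1 : (Nat.factorial m : ℝ) ≠ 0 := Nat.cast_ne_zero.mpr (Nat.factorial_ne_zero m)
    have hm2 : ((m:ℝ) + 1) ≠ 0 := by positivity
    push_cast
    field_simp
    ring
  rw [Finset.sum_congr rfl hterm, tele]
  simp only [Tfun, show e+1-e = 1 from by omega, show k-e+e = k from by omega,
    Nat.sub_zero, pow_zero, pow_one, Nat.factorial_zero, Nat.cast_one, Nat.add_zero,
    show k-e+0 = k-e from rfl, mul_zero, mul_one, zero_mul, add_zero]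
  have hfe : (Nat.factorial e : ℝ) ≠ 0 := Nat.cast_ne_zero.mpr (Nat.factorial_ne_zero e)
  have he2 : ((e:ℝ) + 2) ≠ 0 := by positivity
  push_cast
  field_simp
  ring

theorem jetHam_eq (k : ℕ) : jetHam k = fun z : (Fin (k+2) → ℝ) × (Fin (k+2) → ℝ) =>
    (1/2 : ℝ) * ((z.2 ⟨0, by omega⟩ +
      ∑ j : Fin k, z.1 ⟨j.1 + 1, by omega⟩ * z.2 ⟨j.1 + 2, by omega⟩) ^ 2
      + z.2 ⟨1, by omega⟩ ^ 2) := by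
  funext z
  have h1 : ((⟨1, by omega⟩ : Fin (k+2)) = ⟨0, by omega⟩) = False := by
    simp [Fin.ext_iff]
  simp [jetHam, powerFn, h1]

theorem pb_anti (k : ℕ) (f g : ((Fin (k+2) → ℝ) × (Fin (k+2) → ℝ)) → ℝ)
    (z : (Fin (k+2) → ℝ) × (Fin (k+2) → ℝ)) :
    poissonBracket k f g z = - poissonBracket k g f z := by
  unfold poissonBracket
  rw [← Finset.sum_neg_distrib]
  exact Finset.sum_congr rfl fun i _ => by ring

theorem pb_snd_snd (k : ℕ) (F G : (Fin (k+2) → ℝ) → ℝ)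
    (z : (Fin (k+2) → ℝ) × (Fin (k+2) → ℝ))
    (hF : DifferentiableAt ℝ F z.2) (hG : DifferentiableAt ℝ G z.2) :
    poissonBracket k (fun z => F z.2) (fun z => G z.2) z = 0 := by
  have hFz : HasFDerivAt (fun z : (Fin (k+2) → ℝ) × (Fin (k+2) → ℝ) => F z.2)
      ((fderiv ℝ F z.2).comp (ContinuousLinearMap.snd ℝ _ _)) z :=
    hF.hasFDerivAt.comp z hasFDerivAt_snd
  have hGz : HasFDerivAt (fun z : (Fin (k+2) → ℝ) × (Fin (k+2) → ℝ) => G z.2)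
      ((fderiv ℝ G z.2).comp (ContinuousLinearMap.snd ℝ _ _)) z :=
    hG.hasFDerivAt.comp z hasFDerivAt_snd
  unfold poissonBracket
  rw [hFz.fderiv, hGz.fderiv]
  apply Finset.sum_eq_zero
  intro i _
  simp

set_option maxHeartbeats 1000000 in
theorem pb_H_snd (k : ℕ) (F : (Fin (k+2) → ℝ) → ℝ)
    (hF : ∀ p, DifferentiableAt ℝ F p)
    (hw : ∀ p, fderiv ℝ F p (wv k p) = 0)
    (z : (Fin (k+2) → ℝ) × (Fin (k+2) → ℝ)) :
    poissonBracket k (jetHam k) (fun z => F z.2) z = 0 := by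
  have hFz : HasFDerivAt (fun z : (Fin (k+2) → ℝ) × (Fin (k+2) → ℝ) => F z.2)
      ((fderiv ℝ F z.2).comp (ContinuousLinearMap.snd ℝ _ _)) z :=
    (hF z.2).hasFDerivAt.comp z hasFDerivAt_snd
  have hP1 := (hasF_p k ⟨0, by omega⟩ z).fun_add (HasFDerivAt.fun_sum (u := (Finset.univ : Finset (Fin k)))
    (fun j _ => (hasF_q k ⟨j.1+1, by omega⟩ z).fun_mul (hasF_p k ⟨j.1+2, by omega⟩ z)))
  have hH := ((hP1.npow 2).fun_add ((hasF_p k ⟨1, by omega⟩ z).npow 2)).const_mul (1/2 : ℝ)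
  rw [jetHam_eq k]
  unfold poissonBracket
  rw [hFz.fderiv, hH.fderiv]
  simp only [ContinuousLinearMap.add_apply, ContinuousLinearMap.smul_apply,
    ContinuousLinearMap.sum_apply, ContinuousLinearMap.coe_comp', Function.comp_apply,
    ContinuousLinearMap.proj_apply, ContinuousLinearMap.coe_fst', ContinuousLinearMap.coe_snd',
     Pi.zero_apply,
    smul_eq_mul, map_zero, mul_zero, zero_mul, zero_add, add_zero, sub_zero, mul_one]
  have key : ∑ x : Fin (k+2),
      (∑ j : Fin k, z.2 ⟨j.1+2, by omega⟩ * (Pi.single x (1:ℝ) : Fin (k+2) → ℝ) ⟨j.1+1, by omega⟩) *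
        (fderiv ℝ F z.2) (Pi.single x 1) = 0 := by
    simp only [Finset.sum_mul]
    rw [Finset.sum_comm]
    have h1 : ∀ j ∈ (Finset.univ : Finset (Fin k)),
        (∑ x : Fin (k+2), z.2 ⟨j.1+2, by omega⟩ * (Pi.single x (1:ℝ) : Fin (k+2) → ℝ) ⟨j.1+1, by omega⟩ *
          (fderiv ℝ F z.2) (Pi.single x 1))
        = z.2 ⟨j.1+2, by omega⟩ *
            (fderiv ℝ F z.2) (Pi.single (⟨j.1+1, by omega⟩ : Fin (k+2)) 1) := by
      intro j _
      rw [Finset.sum_eq_single (⟨j.1+1, by omega⟩ : Fin (k+2))]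
      · rw [Pi.single_apply, if_pos rfl, mul_one]
      · intro x _ hx
        rw [Pi.single_apply, if_neg (Ne.symm hx), mul_zero, zero_mul]
      · intro h; exact absurd (Finset.mem_univ _) h
    rw [Finset.sum_congr rfl h1]
    have h2 : ∑ j : Fin k, z.2 ⟨j.1+2, by omega⟩ *
        (fderiv ℝ F z.2) (Pi.single (⟨j.1+1, by omega⟩ : Fin (k+2)) 1)
        = (fderiv ℝ F z.2) (wv k z.2) := by
      rw [wv, map_sum]
      exact Finset.sum_congr rfl fun j _ => by rw [map_smul, smul_eq_mul]
    rw [h2, hw z.2]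
  have step : ∀ x ∈ (Finset.univ : Finset (Fin (k+2))),
      (1:ℝ)/2 * (↑(2:ℕ) * (z.2 ⟨0, by omega⟩ +
          ∑ i : Fin k, z.1 ⟨i.1+1, by omega⟩ * z.2 ⟨i.1+2, by omega⟩) ^ (2-1) *
        ∑ j : Fin k, z.2 ⟨j.1+2, by omega⟩ * (Pi.single x (1:ℝ) : Fin (k+2) → ℝ) ⟨j.1+1, by omega⟩) *
        (fderiv ℝ F z.2) (Pi.single x 1)
      = (z.2 ⟨0, by omega⟩ + ∑ i : Fin k, z.1 ⟨i.1+1, by omega⟩ * z.2 ⟨i.1+2, by omega⟩) *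
          ((∑ j : Fin k, z.2 ⟨j.1+2, by omega⟩ * (Pi.single x (1:ℝ) : Fin (k+2) → ℝ) ⟨j.1+1, by omega⟩) *
            (fderiv ℝ F z.2) (Pi.single x 1)) := by
    intro x _
    push_cast
    ring
  rw [Finset.sum_congr rfl step, ← Finset.mul_sum, key, mul_zero]

theorem integral_rep (k : ℕ) (hk : 2 ≤ k) (b : Fin (k+2)) (hb : 1 ≤ b.1) :
    ∃ F : (Fin (k+2) → ℝ) → ℝ, integralFamily k b = (fun z => F z.2) ∧
      (∀ p, DifferentiableAt ℝ F p) ∧ (∀ p, fderiv ℝ F p (wv k p) = 0) := by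
  rcases eq_or_lt_of_le hb with h1 | h1
  · refine ⟨fun p => p ⟨0, by omega⟩, ?_, ?_, ?_⟩
    · unfold integralFamily
      rw [if_neg (by omega), if_pos (by omega)]
    · exact fun p => (hasFDerivAt_apply (𝕜 := ℝ) (⟨0, by omega⟩ : Fin (k+2)) p).differentiableAt
    · intro p
      rw [(hasFDerivAt_apply (𝕜 := ℝ) (⟨0, by omega⟩ : Fin (k+2)) p).fderiv,
        ContinuousLinearMap.proj_apply, wv_apply, dif_neg (by simp)]
  rcases eq_or_lt_of_le (Nat.succ_le_of_lt h1) with h2 | h2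
  · refine ⟨fun p => p ⟨k+1, by omega⟩, ?_, ?_, ?_⟩
    · unfold integralFamily
      rw [if_neg (by omega), if_neg (by omega), if_pos (by omega)]
    · exact fun p => (hasFDerivAt_apply (𝕜 := ℝ) (⟨k+1, by omega⟩ : Fin (k+2)) p).differentiableAt
    · intro p
      rw [(hasFDerivAt_apply (𝕜 := ℝ) (⟨k+1, by omega⟩ : Fin (k+2)) p).fderiv,
        ContinuousLinearMap.proj_apply, wv_apply, dif_neg (by simp)]
  · refine ⟨Gfun k (b.1 - 1), ?_, fun p => Gfun_diff k (b.1-1) p,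
      fun p => Gfun_wv k (b.1-1) (by omega) (by omega) p⟩
    unfold integralFamily
    rw [if_neg (by omega), if_neg (by omega), if_neg (by omega)]
    funext z
    exact casimir_eq_Gfun k (b.1-1) (by omega) (by omega) z


/-- the `k+2` functions `H`, `p_x`, `p_y`, `C̃_2, …, C̃_k` pairwise
Poisson-commute on `ℝ^{2(k+2)}`. -/
theorem stmt_4 (k : ℕ) (hk : 2 ≤ k) (a b : Fin (k + 2))
    (z : (Fin (k + 2) → ℝ) × (Fin (k + 2) → ℝ)) :
    poissonBracket k (integralFamily k a) (integralFamily k b) z = 0 := by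
  by_cases ha : a.1 = 0
  · have ea : integralFamily k a = jetHam k := by unfold integralFamily; rw [if_pos ha]
    by_cases hb : b.1 = 0
    · have eb : integralFamily k b = jetHam k := by unfold integralFamily; rw [if_pos hb]
      have h := pb_anti k (integralFamily k a) (integralFamily k b) z
      rw [ea, eb] at h ⊢
      linarith
    · obtain ⟨F, hrep, hdiff, hwv⟩ := integral_rep k hk b (by omega)
      rw [ea, hrep]
      exact pb_H_snd k F hdiff hwv z
  · by_cases hb : b.1 = 0
    · have eb : integralFamily k b = jetHam k := by unfold integralFamily; rw [if_pos hb]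
      obtain ⟨F, hrep, hdiff, hwv⟩ := integral_rep k hk a (by omega)
      rw [pb_anti, eb, hrep, pb_H_snd k F hdiff hwv z, neg_zero]
    · obtain ⟨F, hrepF, hdF, _⟩ := integral_rep k hk a (by omega)
      obtain ⟨G, hrepG, hdG, _⟩ := integral_rep k hk b (by omega)
      rw [hrepF, hrepG]
      exact pb_snd_snd k F G z (hdF z.2) (hdG z.2)
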